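/- arXiv:2304.01698 — 3 statements merged into one kernel-verified Lean document; each statement's English description precedes it below -/
import Mathlib

section
/- Let Σ be an n×n real symmetric positive definite matrix satisfying σ_low·I ⪯ Σ ⪯ σ_high·I with 0 < σ_low ≤ σ_high. If Σ = L·Lᵀ is the Cholesky decomposition with L lower triangular with positive diagonal, then every entry of L satisfies |L_{ij}| ≤ √σ_high, and every diagonal entry satisfies |L_{ii}| ≥ σ_low^{n/2} · σ_high^{(1−n)/2}. -/
open scoped Matrix

/-- Entry bounds on the Cholesky factor: if `σ_low·I ⪯ Σ ⪯ σ_high·I` with `0 < σ_low ≤ σ_high`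
and `Σ = L·Lᵀ` with `L` lower triangular with positive diagonal, then every entry of `L` has
absolute value at most `√σ_high`, and every diagonal entry satisfies
`|L i i| ≥ σ_low^{n/2} σ_high^{(1−n)/2}`. -/
theorem stmt5 (n : ℕ) (S L : Matrix (Fin n) (Fin n) ℝ)
    (σlow σhigh : ℝ) (h0 : 0 < σlow) (h1 : σlow ≤ σhigh)
    (hpd : S.PosDef)
    (hlo : (S - σlow • (1 : Matrix (Fin n) (Fin n) ℝ)).PosSemidef)
    (hhi : (σhigh • (1 : Matrix (Fin n) (Fin n) ℝ) - S).PosSemidef)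
    (hLtri : ∀ i j : Fin n, i < j → L i j = 0)
    (hLdiag : ∀ i : Fin n, 0 < L i i)
    (hchol : S = L * Lᵀ) :
    (∀ i j : Fin n, |L i j| ≤ Real.sqrt σhigh) ∧
    (∀ i : Fin n, σlow ^ ((n : ℝ) / 2) * σhigh ^ ((1 - (n : ℝ)) / 2) ≤ |L i i|) := by
  have hσh : 0 < σhigh := lt_of_lt_of_le h0 h1
  have hdiag_le : ∀ i : Fin n, S i i ≤ σhigh := by
    intro i
    have := hhi.dotProduct_mulVec_nonneg (Pi.single i 1)
    simp [Matrix.sub_mulVec, dotProduct_sub, Matrix.mulVec_single,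
      Matrix.smul_mulVec, Matrix.one_mulVec] at this
    linarith [this]
  have hrow : ∀ i : Fin n, ∑ k, (L i k) ^ 2 = S i i := by
    intro i
    rw [hchol]
    simp [Matrix.mul_apply, Matrix.transpose_apply, sq]
  have hsq : ∀ i j : Fin n, (L i j) ^ 2 ≤ σhigh := by
    intro i j
    calc (L i j) ^ 2 ≤ ∑ k, (L i k) ^ 2 :=
          Finset.single_le_sum (f := fun k => (L i k) ^ 2)
            (fun k _ => sq_nonneg _) (Finset.mem_univ j)
      _ = S i i := hrow i
      _ ≤ σhigh := hdiag_le i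
  have part1 : ∀ i j : Fin n, |L i j| ≤ Real.sqrt σhigh := by
    intro i j
    rw [← Real.sqrt_sq_eq_abs]
    exact Real.sqrt_le_sqrt (hsq i j)
  refine ⟨part1, ?_⟩
  have herm := hpd.1
  have hev : ∀ i : Fin n, σlow ≤ herm.eigenvalues i := by
    intro i
    set v : EuclideanSpace ℝ (Fin n) := herm.eigenvectorBasis i with hv
    have hnv : ‖v‖ = 1 := herm.eigenvectorBasis.orthonormal.1 i
    have h2 : (inner ℝ v v : ℝ) = 1 := by
      rw [real_inner_self_eq_norm_mul_norm, hnv, one_mul]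
    have hnorm : (star (v : Fin n → ℝ)) ⬝ᵥ (v : Fin n → ℝ) = 1 := by
      rw [EuclideanSpace.inner_eq_star_dotProduct] at h2
      simpa using h2
    have h3 := hlo.dotProduct_mulVec_nonneg (v : Fin n → ℝ)
    have h4 : herm.eigenvalues i = (star (v : Fin n → ℝ)) ⬝ᵥ (S *ᵥ (v : Fin n → ℝ)) := by
      simpa using herm.eigenvalues_eq i
    rw [Matrix.sub_mulVec, dotProduct_sub, Matrix.smul_mulVec,
      Matrix.one_mulVec, dotProduct_smul, hnorm] at h3
    rw [h4]
    simpa [star_trivial] using h3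
  have hdetL : L.det = ∏ i, L i i := by
    apply Matrix.det_of_lowerTriangular
    intro i j hij
    exact hLtri i j hij
  have hdetS : S.det = ∏ i, (L i i) ^ 2 := by
    rw [hchol, Matrix.det_mul, Matrix.det_transpose, hdetL, ← Finset.prod_mul_distrib]
    simp [sq]
  have hdet_lb : σlow ^ n ≤ S.det := by
    rw [herm.det_eq_prod_eigenvalues]
    calc σlow ^ n = ∏ _i : Fin n, σlow := by simp
      _ ≤ ∏ i, herm.eigenvalues i :=
          Finset.prod_le_prod (fun i _ => h0.le) (fun i _ => hev i)
  intro i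
  have hn1 : 1 ≤ n := i.pos
  have hcard : (Finset.univ.erase i).card = n - 1 := by
    rw [Finset.card_erase_of_mem (Finset.mem_univ i), Finset.card_univ, Fintype.card_fin]
  have key : σlow ^ n ≤ (L i i) ^ 2 * σhigh ^ (n - 1) := by
    calc σlow ^ n ≤ S.det := hdet_lb
      _ = (L i i) ^ 2 * ∏ j ∈ Finset.univ.erase i, (L j j) ^ 2 := by
          rw [hdetS, ← Finset.mul_prod_erase _ _ (Finset.mem_univ i)]
      _ ≤ (L i i) ^ 2 * σhigh ^ (n - 1) := by
          apply mul_le_mul_of_nonneg_left _ (sq_nonneg _)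
          calc ∏ j ∈ Finset.univ.erase i, (L j j) ^ 2
              ≤ ∏ _j ∈ Finset.univ.erase i, σhigh :=
                Finset.prod_le_prod (fun j _ => sq_nonneg _) (fun j _ => hsq j j)
            _ = σhigh ^ (n - 1) := by rw [Finset.prod_const, hcard]
  set r : ℝ := σlow ^ ((n : ℝ) / 2) * σhigh ^ ((1 - (n : ℝ)) / 2) with hr
  have hr0 : 0 ≤ r := by positivity
  have e1 : (σlow ^ ((n : ℝ) / 2)) ^ 2 = σlow ^ n := by
    rw [← Real.rpow_natCast (σlow ^ ((n : ℝ) / 2)) 2, ← Real.rpow_mul h0.le]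
    norm_num
  have e2 : (σhigh ^ ((1 - (n : ℝ)) / 2)) ^ 2 = σhigh * (σhigh ^ n)⁻¹ := by
    rw [← Real.rpow_natCast (σhigh ^ ((1 - (n : ℝ)) / 2)) 2, ← Real.rpow_mul hσh.le]
    have h : (1 - (n : ℝ)) / 2 * ((2 : ℕ) : ℝ) = 1 - n := by push_cast; ring
    rw [h, Real.rpow_sub hσh, Real.rpow_one, Real.rpow_natCast, div_eq_mul_inv]
  have hpow : σhigh ^ (n - 1) * σhigh = σhigh ^ n := by
    rw [← pow_succ, Nat.sub_add_cancel hn1]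
  have hkey2 : σlow ^ n * σhigh ≤ (L i i) ^ 2 * σhigh ^ n := by
    calc σlow ^ n * σhigh ≤ ((L i i) ^ 2 * σhigh ^ (n - 1)) * σhigh :=
          mul_le_mul_of_nonneg_right key hσh.le
      _ = (L i i) ^ 2 * σhigh ^ n := by rw [mul_assoc, hpow]
  have hsq2 : r ^ 2 ≤ (L i i) ^ 2 := by
    rw [hr, mul_pow, e1, e2, ← mul_assoc, ← div_eq_mul_inv,
      div_le_iff₀ (pow_pos hσh n)]
    exact hkey2
  calc r = Real.sqrt (r ^ 2) := (Real.sqrt_sq hr0).symm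
    _ ≤ Real.sqrt ((L i i) ^ 2) := Real.sqrt_le_sqrt hsq2
    _ = |L i i| := Real.sqrt_sq_eq_abs _
end

section
/- Consider linearized estimator dynamics x̃_{k+1|k} = U_k F̄^x_k x̃_k + U_k F̄^v_k v_{k+1} (time update) and x̃_{k+1} = (I − K̄_{k+1} U^a_{k+1} Ḡ_{k+1}) x̃_{k+1|k} − K̄_{k+1} ε_{k+1} (measurement update), with zero-mean noises v_{k+1} ~ Cov R_{k+1} and ε_{k+1} ~ Cov R̄_{k+1} independent of each other and of x̃_k. Suppose the estimator covariance recursion is Σ̄_{k+1|k} = U_k F̄^x_k Σ̄_k (F̄^x_k)ᵀ U_k + U_k F̄^v_k R_{k+1} (F̄^v_k)ᵀ U_k and Σ̄_{k+1} = (I − K̄_{k+1} U^a_{k+1} Ḡ_{k+1}) Σ̄_{k+1|k} (I − K̄_{k+1} U^a_{k+1} Ḡ_{k+1})ᵀ + K̄_{k+1} R̄_{k+1} K̄_{k+1}ᵀ. If E[x̃_k x̃_kᵀ] ⪯ Σ̄_k, then E[x̃_{k+1} x̃_{k+1}ᵀ] ⪯ Σ̄_{k+1}. -/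
open MeasureTheory ProbabilityTheory
open scoped Matrix

/-- The (second-moment) covariance matrix `E[x xᵀ]` of a random vector. -/
noncomputable def covMat {Ω : Type*} [MeasurableSpace Ω] (μ : Measure Ω) {n : ℕ}
    (x : Ω → Fin n → ℝ) : Matrix (Fin n) (Fin n) ℝ :=
  Matrix.of fun i j => ∫ ω, x ω i * x ω j ∂μ

set_option linter.unusedSectionVars false

section Aux
variable {Ω : Type*} [MeasurableSpace Ω] {μ : Measure Ω} [IsProbabilityMeasure μ]

lemma int_mul {f g : Ω → ℝ} (hf : MemLp f 2 μ) (hg : MemLp g 2 μ) :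
    Integrable (fun ω => f ω * g ω) μ := by
  have h := memLp_one_iff_integrable.mp
    (hg.smul (𝕜 := ℝ) hf (r := 1))
  exact h

lemma memLp_mulVec {n q : ℕ} (M : Matrix (Fin q) (Fin n) ℝ) (f : Ω → Fin n → ℝ)
    (hf : ∀ i, MemLp (fun ω => f ω i) 2 μ) (i : Fin q) :
    MemLp (fun ω => M.mulVec (f ω) i) 2 μ := by
  simp only [Matrix.mulVec, dotProduct]
  have h := memLp_finsetSum' (μ := μ) (p := (2:ENNReal)) Finset.univ
    (fun k (_ : k ∈ Finset.univ) => (hf k).const_mul (M i k))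
  convert h using 1
  funext ω
  simp [Finset.sum_apply]

lemma cross_zero {n m : ℕ} (f : Ω → Fin n → ℝ) (g : Ω → Fin m → ℝ)
    (hf : ∀ i, MemLp (fun ω => f ω i) 2 μ) (hg : ∀ i, MemLp (fun ω => g ω i) 2 μ)
    (hgmean : ∀ i, ∫ ω, g ω i ∂μ = 0)
    (hind : IndepFun f g μ) (i : Fin n) (j : Fin m) :
    ∫ ω, f ω i * g ω j ∂μ = 0 := by
  have hij : IndepFun (fun ω => f ω i) (fun ω => g ω j) μ :=
    hind.comp (measurable_pi_apply i) (measurable_pi_apply j)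
  have h := hij.integral_fun_mul_eq_mul_integral (hf i).1
    (hg j).1
  simpa [hgmean j] using h

lemma cross_zero_mulVec {n m q r : ℕ} (M : Matrix (Fin q) (Fin n) ℝ)
    (N : Matrix (Fin r) (Fin m) ℝ) (f : Ω → Fin n → ℝ) (g : Ω → Fin m → ℝ)
    (hf : ∀ i, MemLp (fun ω => f ω i) 2 μ) (hg : ∀ i, MemLp (fun ω => g ω i) 2 μ)
    (hcross : ∀ i j, ∫ ω, f ω i * g ω j ∂μ = 0) (i : Fin q) (j : Fin r) :
    ∫ ω, M.mulVec (f ω) i * N.mulVec (g ω) j ∂μ = 0 := by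
  simp only [Matrix.mulVec, dotProduct]
  have h : ∀ ω, (∑ k, M i k * f ω k) * (∑ l, N j l * g ω l)
      = ∑ k, ∑ l, M i k * N j l * (f ω k * g ω l) := by
    intro ω
    rw [Finset.sum_mul_sum]
    exact Finset.sum_congr rfl fun k _ => Finset.sum_congr rfl fun l _ => by ring
  simp_rw [h]
  rw [integral_finset_sum _ (fun k _ => integrable_finset_sum _
    (fun l _ => ((int_mul (hf k) (hg l)).const_mul _)))]
  have hz : ∀ k, ∫ ω, ∑ l, M i k * N j l * (f ω k * g ω l) ∂μ = 0 := by
    intro k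
    rw [integral_finset_sum _ (fun l _ => ((int_mul (hf k) (hg l)).const_mul _))]
    refine Finset.sum_eq_zero fun l _ => ?_
    rw [integral_const_mul, hcross, mul_zero]
  simp [hz]

lemma covMat_mulVec {n q : ℕ} (M : Matrix (Fin q) (Fin n) ℝ) (f : Ω → Fin n → ℝ)
    (hf : ∀ i, MemLp (fun ω => f ω i) 2 μ) :
    covMat μ (fun ω => M.mulVec (f ω)) = M * covMat μ f * Mᵀ := by
  ext i j
  simp only [covMat, Matrix.of_apply, Matrix.mul_apply, Matrix.transpose_apply,
    Matrix.mulVec, dotProduct]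
  have h : ∀ ω, (∑ k, M i k * f ω k) * (∑ l, M j l * f ω l)
      = ∑ k, ∑ l, M i k * M j l * (f ω k * f ω l) := by
    intro ω
    rw [Finset.sum_mul_sum]
    exact Finset.sum_congr rfl fun k _ => Finset.sum_congr rfl fun l _ => by ring
  simp_rw [h]
  rw [integral_finset_sum _ (fun k _ => integrable_finset_sum _
    (fun l _ => ((int_mul (hf k) (hf l)).const_mul _)))]
  have hk : ∀ k, ∫ ω, ∑ l, M i k * M j l * (f ω k * f ω l) ∂μ
      = ∑ l, M i k * M j l * ∫ ω, f ω k * f ω l ∂μ := by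
    intro k
    rw [integral_finset_sum _ (fun l _ => ((int_mul (hf k) (hf l)).const_mul _))]
    exact Finset.sum_congr rfl fun l _ => integral_const_mul _ _
  simp_rw [hk]
  rw [Finset.sum_comm]
  refine Finset.sum_congr rfl fun l _ => ?_
  rw [Finset.sum_mul]
  exact Finset.sum_congr rfl fun k _ => by ring

lemma covMat_add {n : ℕ} (f g : Ω → Fin n → ℝ)
    (hf : ∀ i, MemLp (fun ω => f ω i) 2 μ) (hg : ∀ i, MemLp (fun ω => g ω i) 2 μ)
    (hcross : ∀ i j, ∫ ω, f ω i * g ω j ∂μ = 0) :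
    covMat μ (fun ω => f ω + g ω) = covMat μ f + covMat μ g := by
  ext i j
  simp only [covMat, Matrix.of_apply, Matrix.add_apply, Pi.add_apply]
  have h : ∀ ω, (f ω i + g ω i) * (f ω j + g ω j)
      = f ω i * f ω j + g ω i * g ω j + (f ω i * g ω j + g ω i * f ω j) := fun ω => by ring
  simp_rw [h]
  have I1 := int_mul (hf i) (hf j)
  have I2 := int_mul (hg i) (hg j)
  have I3 := int_mul (hf i) (hg j)
  have I4 := int_mul (hg i) (hf j)
  have IA : Integrable (fun ω => f ω i * f ω j + g ω i * g ω j) μ := I1.add I2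
  have IB : Integrable (fun ω => f ω i * g ω j + g ω i * f ω j) μ := I3.add I4
  rw [integral_add IA IB, integral_add I1 I2, integral_add I3 I4, hcross i j]
  have h2 : ∫ ω, g ω i * f ω j ∂μ = 0 := by
    simp_rw [mul_comm]; exact hcross j i
  rw [h2]; ring

end Aux

/-- One-step conservativeness of the I-UKF under statistical linearization: with
time update `x̃⁺ₚ = U F̄ˣ x̃ + U F̄ᵛ v` and measurement update
`x̃⁺ = (I − K̄ Uᵃ Ḡ) x̃⁺ₚ − K̄ ε`, zero-mean independent noises with covariances `R, R̄`,
and the matching covariance recursions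
`Σ̄ₚ = U F̄ˣ Σ̄ (F̄ˣ)ᵀ U + U F̄ᵛ R (F̄ᵛ)ᵀ U`,
`Σ̄⁺ = (I − K̄ Uᵃ Ḡ) Σ̄ₚ (I − K̄ Uᵃ Ḡ)ᵀ + K̄ R̄ K̄ᵀ`,
if `E[x̃ x̃ᵀ] ⪯ Σ̄` then `E[x̃⁺ (x̃⁺)ᵀ] ⪯ Σ̄⁺`. -/
theorem stmt11 {Ω : Type*} [MeasurableSpace Ω] (μ : Measure Ω) [IsProbabilityMeasure μ]
    (n m p : ℕ)
    (U Fx : Matrix (Fin n) (Fin n) ℝ) (Fv : Matrix (Fin n) (Fin m) ℝ)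
    (Kbar : Matrix (Fin n) (Fin p) ℝ) (Ua : Matrix (Fin p) (Fin p) ℝ)
    (G : Matrix (Fin p) (Fin n) ℝ)
    (hU : Uᵀ = U) (hUa : Uaᵀ = Ua)
    (R : Matrix (Fin m) (Fin m) ℝ) (Rbar : Matrix (Fin p) (Fin p) ℝ)
    (x : Ω → Fin n → ℝ) (v : Ω → Fin m → ℝ) (ε : Ω → Fin p → ℝ)
    (hxm : Measurable x) (hvm : Measurable v) (hεm : Measurable ε)
    (hx2 : ∀ i, MemLp (fun ω => x ω i) 2 μ)
    (hv2 : ∀ i, MemLp (fun ω => v ω i) 2 μ)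
    (hε2 : ∀ i, MemLp (fun ω => ε ω i) 2 μ)
    (hvmean : ∀ i, ∫ ω, v ω i ∂μ = 0) (hεmean : ∀ i, ∫ ω, ε ω i ∂μ = 0)
    (hRv : covMat μ v = R) (hRε : covMat μ ε = Rbar)
    (hxv : IndepFun x v μ) (hxε : IndepFun x ε μ) (hvε : IndepFun v ε μ)
    (Sbar Sbarpred Sbarnext : Matrix (Fin n) (Fin n) ℝ)
    (hSpred : Sbarpred = U * Fx * Sbar * Fxᵀ * U + U * Fv * R * Fvᵀ * U)
    (hSnext : Sbarnext = (1 - Kbar * Ua * G) * Sbarpred * (1 - Kbar * Ua * G)ᵀ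
        + Kbar * Rbar * Kbarᵀ)
    (xnext : Ω → Fin n → ℝ)
    (hxnext : ∀ ω, xnext ω =
      (1 - Kbar * Ua * G).mulVec ((U * Fx).mulVec (x ω) + (U * Fv).mulVec (v ω))
        - Kbar.mulVec (ε ω))
    (hcons : (Sbar - covMat μ x).PosSemidef) :
    (Sbarnext - covMat μ xnext).PosSemidef := by
  set A := (1 - Kbar * Ua * G) * (U * Fx) with hA
  set B := (1 - Kbar * Ua * G) * (U * Fv) with hB
  have hxfun : xnext = fun ω => A.mulVec (x ω) +
      (B.mulVec (v ω) + (-Kbar).mulVec (ε ω)) := by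
    funext ω
    rw [hxnext ω]
    simp [hA, hB, Matrix.mulVec_add, ← Matrix.mulVec_mulVec, Matrix.neg_mulVec,
      sub_eq_add_neg, add_assoc]
  have cxv : ∀ i j, ∫ ω, x ω i * v ω j ∂μ = 0 :=
    cross_zero x v hx2 hv2 hvmean hxv
  have cxε : ∀ i j, ∫ ω, x ω i * ε ω j ∂μ = 0 :=
    cross_zero x ε hx2 hε2 hεmean hxε
  have cvε : ∀ i j, ∫ ω, v ω i * ε ω j ∂μ = 0 :=
    cross_zero v ε hv2 hε2 hεmean hvε
  have hAx2 : ∀ i, MemLp (fun ω => A.mulVec (x ω) i) 2 μ := memLp_mulVec A x hx2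
  have hBv2 : ∀ i, MemLp (fun ω => B.mulVec (v ω) i) 2 μ := memLp_mulVec B v hv2
  have hCε2 : ∀ i, MemLp (fun ω => (-Kbar).mulVec (ε ω) i) 2 μ :=
    memLp_mulVec (-Kbar) ε hε2
  have hG2 : ∀ i, MemLp (fun ω => (B.mulVec (v ω) + (-Kbar).mulVec (ε ω)) i) 2 μ :=
    fun i => (hBv2 i).add (hCε2 i)
  have hc1 : ∀ i j, ∫ ω, A.mulVec (x ω) i *
      (B.mulVec (v ω) + (-Kbar).mulVec (ε ω)) j ∂μ = 0 := by
    intro i j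
    have e : ∀ ω, A.mulVec (x ω) i * (B.mulVec (v ω) + (-Kbar).mulVec (ε ω)) j
        = A.mulVec (x ω) i * B.mulVec (v ω) j
          + A.mulVec (x ω) i * (-Kbar).mulVec (ε ω) j := fun ω => by
      simp [Pi.add_apply, mul_add]
    simp_rw [e]
    have IA : Integrable (fun ω => A.mulVec (x ω) i * B.mulVec (v ω) j) μ :=
      int_mul (hAx2 i) (hBv2 j)
    have IB : Integrable (fun ω => A.mulVec (x ω) i * (-Kbar).mulVec (ε ω) j) μ :=
      int_mul (hAx2 i) (hCε2 j)
    rw [integral_add IA IB, cross_zero_mulVec A B x v hx2 hv2 cxv i j,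
      cross_zero_mulVec A (-Kbar) x ε hx2 hε2 cxε i j, add_zero]
  have h1 : covMat μ xnext = A * covMat μ x * Aᵀ +
      (B * R * Bᵀ + (-Kbar) * Rbar * (-Kbar)ᵀ) := by
    rw [hxfun]
    rw [covMat_add (fun ω => A.mulVec (x ω))
      (fun ω => B.mulVec (v ω) + (-Kbar).mulVec (ε ω)) hAx2 hG2 hc1]
    rw [covMat_add (fun ω => B.mulVec (v ω)) (fun ω => (-Kbar).mulVec (ε ω))
      hBv2 hCε2 (fun i j => cross_zero_mulVec B (-Kbar) v ε hv2 hε2 cvε i j)]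
    rw [covMat_mulVec A x hx2, covMat_mulVec B v hv2, covMat_mulVec (-Kbar) ε hε2,
      hRv, hRε]
  have h2 : Sbarnext - covMat μ xnext = A * (Sbar - covMat μ x) * Aᵀ := by
    rw [h1, hSnext, hSpred, hA, hB]
    simp only [Matrix.transpose_mul, Matrix.transpose_sub, Matrix.transpose_one,
      Matrix.transpose_neg, hU, hUa, Matrix.mul_add, Matrix.add_mul, Matrix.mul_sub,
      Matrix.sub_mul, Matrix.mul_assoc, Matrix.neg_mul, Matrix.mul_neg, neg_neg]
    abel
  rw [h2]
  have hps := hcons.mul_mul_conjTranspose_same A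
  have : Aᴴ = Aᵀ := Matrix.conjTranspose_eq_transpose_of_trivial A
  rwa [this] at hps
end

section
/- By induction: if the initial estimate pair is conservative, E[x̃_0 x̃_0ᵀ] ⪯ Σ̄_0, and the error and covariance recursions of the previous statement hold for every k, then E[x̃_k x̃_kᵀ] ⪯ Σ̄_k for all k ≥ 0. -/
open MeasureTheory ProbabilityTheory
open scoped Matrix

/-- Cross second-moment matrix `E[x yᵀ]`. -/
noncomputable def crossMat {Ω : Type*} [MeasurableSpace Ω] (μ : Measure Ω) {n q : ℕ}
    (x : Ω → Fin n → ℝ) (y : Ω → Fin q → ℝ) : Matrix (Fin n) (Fin q) ℝ :=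
  Matrix.of fun i j => ∫ ω, x ω i * y ω j ∂μ

section Aux

variable {Ω : Type*} [MeasurableSpace Ω] {μ : Measure Ω} [IsProbabilityMeasure μ]
variable {n q r s : ℕ}

/-- componentwise L2 -/
def L2v (μ : Measure Ω) {n : ℕ} (x : Ω → Fin n → ℝ) : Prop :=
  ∀ i, MemLp (fun ω => x ω i) 2 μ

lemma L2v.mul_integrable {x : Ω → Fin n → ℝ} {y : Ω → Fin q → ℝ}
    (hx : L2v μ x) (hy : L2v μ y) (i : Fin n) (j : Fin q) :
    Integrable (fun ω => x ω i * y ω j) μ := by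
  have h := (hy j).smul (hx i) (r := 1)
    (hpqr := ⟨by rw [ENNReal.inv_two_add_inv_two, inv_one]⟩)
  simpa [smul_eq_mul, Pi.mul_def] using memLp_one_iff_integrable.mp h

lemma L2v.mulVec {x : Ω → Fin n → ℝ} (A : Matrix (Fin q) (Fin n) ℝ) (hx : L2v μ x) :
    L2v μ (fun ω => A.mulVec (x ω)) := by
  intro i
  have h := memLp_finset_sum' (μ := μ) Finset.univ
    (f := fun a ω => A i a * x ω a) (fun a _ => (hx a).const_mul _)
  simp only [Matrix.mulVec, dotProduct]
  convert h using 1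
  ext ω
  simp

lemma L2v.add' {x x' : Ω → Fin n → ℝ} (hx : L2v μ x) (hx' : L2v μ x') :
    L2v μ (x + x') := fun i => (hx i).add (hx' i)

lemma crossMat_mulVec {x : Ω → Fin n → ℝ} {y : Ω → Fin q → ℝ}
    (A : Matrix (Fin r) (Fin n) ℝ) (B : Matrix (Fin s) (Fin q) ℝ)
    (hx : L2v μ x) (hy : L2v μ y) :
    crossMat μ (fun ω => A.mulVec (x ω)) (fun ω => B.mulVec (y ω))
      = A * crossMat μ x y * Bᵀ := by
  ext i j
  have hint : ∀ (a : Fin n) (b : Fin q),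
      Integrable (fun ω => A i a * B j b * (x ω a * y ω b)) μ :=
    fun a b => (hx.mul_integrable hy a b).const_mul _
  have key : (∫ ω, (A.mulVec (x ω)) i * (B.mulVec (y ω)) j ∂μ)
      = ∑ a : Fin n, ∑ b : Fin q, A i a * B j b * ∫ ω, x ω a * y ω b ∂μ := by
    have : ∀ ω, (A.mulVec (x ω)) i * (B.mulVec (y ω)) j
        = ∑ a : Fin n, ∑ b : Fin q, A i a * B j b * (x ω a * y ω b) := by
      intro ω
      simp only [Matrix.mulVec, dotProduct, Finset.sum_mul_sum]
      exact Finset.sum_congr rfl fun a _ => Finset.sum_congr rfl fun b _ => by ring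
    rw [integral_congr_ae (Filter.Eventually.of_forall this)]
    rw [integral_finset_sum _ fun a _ => integrable_finset_sum _ fun b _ => hint a b]
    exact Finset.sum_congr rfl fun a _ => by
      rw [integral_finset_sum _ fun b _ => hint a b]
      exact Finset.sum_congr rfl fun b _ => integral_const_mul _ _
  simp only [crossMat, Matrix.of_apply, key, Matrix.mul_apply, Matrix.transpose_apply,
    Finset.sum_mul, Finset.mul_sum]
  rw [Finset.sum_comm]
  exact Finset.sum_congr rfl fun b _ => Finset.sum_congr rfl fun a _ => by ring

lemma crossMat_add_left {x x' : Ω → Fin n → ℝ} {y : Ω → Fin q → ℝ}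
    (hx : L2v μ x) (hx' : L2v μ x') (hy : L2v μ y) :
    crossMat μ (x + x') y = crossMat μ x y + crossMat μ x' y := by
  ext i j
  simp only [crossMat, Matrix.of_apply, Matrix.add_apply, Pi.add_apply, add_mul]
  exact integral_add (hx.mul_integrable hy i j) (hx'.mul_integrable hy i j)

lemma crossMat_add_right {x : Ω → Fin n → ℝ} {y y' : Ω → Fin q → ℝ}
    (hx : L2v μ x) (hy : L2v μ y) (hy' : L2v μ y') :
    crossMat μ x (y + y') = crossMat μ x y + crossMat μ x y' := by
  ext i j
  simp only [crossMat, Matrix.of_apply, Matrix.add_apply, Pi.add_apply, mul_add]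
  exact integral_add (hx.mul_integrable hy i j) (hx.mul_integrable hy' i j)

lemma crossMat_zero_of_indep {x : Ω → Fin n → ℝ} {y : Ω → Fin q → ℝ}
    (h : IndepFun x y μ) (hxm : Measurable x) (hym : Measurable y)
    (hmean : (∀ i, ∫ ω, x ω i ∂μ = 0) ∨ (∀ j, ∫ ω, y ω j ∂μ = 0)) :
    crossMat μ x y = 0 := by
  ext i j
  have hij : IndepFun (fun ω => x ω i) (fun ω => y ω j) μ :=
    h.comp (measurable_pi_apply i) (measurable_pi_apply j)
  have := hij.integral_fun_mul_eq_mul_integral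
    ((hxm.eval (a := i))).aestronglyMeasurable ((hym.eval (a := j))).aestronglyMeasurable
  simp only [crossMat, Matrix.of_apply, Matrix.zero_apply, this]
  rcases hmean with h0 | h0
  · rw [h0 i, zero_mul]
  · rw [h0 j, mul_zero]

lemma covMat_eq_crossMat {x : Ω → Fin n → ℝ} : covMat μ x = crossMat μ x x := rfl

lemma covMat_add3 {x1 x2 x3 : Ω → Fin n → ℝ}
    (h1 : L2v μ x1) (h2 : L2v μ x2) (h3 : L2v μ x3) :
    covMat μ (x1 + x2 + x3)
      = covMat μ x1 + crossMat μ x1 x2 + crossMat μ x1 x3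
        + crossMat μ x2 x1 + covMat μ x2 + crossMat μ x2 x3
        + crossMat μ x3 x1 + crossMat μ x3 x2 + covMat μ x3 := by
  have h12 : L2v μ (x1 + x2) := h1.add' h2
  rw [covMat_eq_crossMat,
    crossMat_add_left h12 h3 (h12.add' h3),
    crossMat_add_right h12 h12 h3,
    crossMat_add_right h3 h12 h3,
    crossMat_add_left h1 h2 h12,
    crossMat_add_right h1 h1 h2,
    crossMat_add_right h2 h1 h2,
    crossMat_add_left h1 h2 h3,
    crossMat_add_right h3 h1 h2,
    covMat_eq_crossMat (x := x1), covMat_eq_crossMat (x := x2), covMat_eq_crossMat (x := x3)]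
  abel

lemma covMat_step {n' m' p' r : ℕ}
    {a : Ω → Fin n' → ℝ} {b : Ω → Fin m' → ℝ} {c : Ω → Fin p' → ℝ}
    (C : Matrix (Fin r) (Fin n') ℝ) (D : Matrix (Fin r) (Fin m') ℝ)
    (E : Matrix (Fin r) (Fin p') ℝ)
    (ham : Measurable a) (hbm : Measurable b) (hcm : Measurable c)
    (ha : L2v μ a) (hb : L2v μ b) (hc : L2v μ c)
    (hbmean : ∀ i, ∫ ω, b ω i ∂μ = 0) (hcmean : ∀ i, ∫ ω, c ω i ∂μ = 0)
    (hab : IndepFun a b μ) (hac : IndepFun a c μ) (hbc : IndepFun b c μ) :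
    covMat μ (fun ω => C.mulVec (a ω) + D.mulVec (b ω) + E.mulVec (c ω))
      = C * covMat μ a * Cᵀ + D * covMat μ b * Dᵀ + E * covMat μ c * Eᵀ := by
  have hf : L2v μ (fun ω => C.mulVec (a ω)) := ha.mulVec C
  have hg : L2v μ (fun ω => D.mulVec (b ω)) := hb.mulVec D
  have hh : L2v μ (fun ω => E.mulVec (c ω)) := hc.mulVec E
  have cab : crossMat μ a b = 0 := crossMat_zero_of_indep hab ham hbm (Or.inr hbmean)
  have cba : crossMat μ b a = 0 := crossMat_zero_of_indep hab.symm hbm ham (Or.inl hbmean)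
  have cac : crossMat μ a c = 0 := crossMat_zero_of_indep hac ham hcm (Or.inr hcmean)
  have cca : crossMat μ c a = 0 := crossMat_zero_of_indep hac.symm hcm ham (Or.inl hcmean)
  have cbc : crossMat μ b c = 0 := crossMat_zero_of_indep hbc hbm hcm (Or.inr hcmean)
  have ccb : crossMat μ c b = 0 := crossMat_zero_of_indep hbc.symm hcm hbm (Or.inr hbmean)
  have hZ : (fun ω => C.mulVec (a ω) + D.mulVec (b ω) + E.mulVec (c ω))
      = (fun ω => C.mulVec (a ω)) + (fun ω => D.mulVec (b ω)) + (fun ω => E.mulVec (c ω)) := rfl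
  rw [hZ, covMat_add3 hf hg hh,
    covMat_eq_crossMat (x := fun ω => C.mulVec (a ω)),
    covMat_eq_crossMat (x := fun ω => D.mulVec (b ω)),
    covMat_eq_crossMat (x := fun ω => E.mulVec (c ω)),
    crossMat_mulVec C C ha ha, crossMat_mulVec C D ha hb, crossMat_mulVec C E ha hc,
    crossMat_mulVec D C hb ha, crossMat_mulVec D D hb hb, crossMat_mulVec D E hb hc,
    crossMat_mulVec E C hc ha, crossMat_mulVec E D hc hb, crossMat_mulVec E E hc hc,
    cab, cba, cac, cca, cbc, ccb, covMat_eq_crossMat (x := a), covMat_eq_crossMat (x := b),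
    covMat_eq_crossMat (x := c)]
  simp [Matrix.mul_zero, Matrix.zero_mul]

end Aux

set_option maxHeartbeats 1000000 in
/-- Conservativeness of the I-UKF by induction: if the initial estimate pair is conservative,
`E[x̃_0 x̃_0ᵀ] ⪯ Σ̄_0`, and for every `k` the linearized error dynamics
`x̃_{k+1} = (I − K̄_{k+1} Uᵃ_{k+1} Ḡ_{k+1})(U_k F̄ˣ_k x̃_k + U_k F̄ᵛ_k v_{k+1}) − K̄_{k+1} ε_{k+1}`
hold with mutually independent zero-mean noises of covariances `R_{k+1}, R̄_{k+1}` and the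
matching Riccati-type covariance recursion for `Σ̄_k`, then `E[x̃_k x̃_kᵀ] ⪯ Σ̄_k` for all `k`. -/
theorem stmt12 {Ω : Type*} [MeasurableSpace Ω] (μ : Measure Ω) [IsProbabilityMeasure μ]
    (n m p : ℕ)
    (U Fx : ℕ → Matrix (Fin n) (Fin n) ℝ) (Fv : ℕ → Matrix (Fin n) (Fin m) ℝ)
    (Kbar : ℕ → Matrix (Fin n) (Fin p) ℝ) (Ua : ℕ → Matrix (Fin p) (Fin p) ℝ)
    (G : ℕ → Matrix (Fin p) (Fin n) ℝ)
    (hU : ∀ k, (U k)ᵀ = U k) (hUa : ∀ k, (Ua k)ᵀ = Ua k)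
    (R : ℕ → Matrix (Fin m) (Fin m) ℝ) (Rbar : ℕ → Matrix (Fin p) (Fin p) ℝ)
    (x : ℕ → Ω → Fin n → ℝ) (v : ℕ → Ω → Fin m → ℝ) (ε : ℕ → Ω → Fin p → ℝ)
    (hxm : ∀ k, Measurable (x k)) (hvm : ∀ k, Measurable (v k)) (hεm : ∀ k, Measurable (ε k))
    (hx2 : ∀ k i, MemLp (fun ω => x k ω i) 2 μ)
    (hv2 : ∀ k i, MemLp (fun ω => v k ω i) 2 μ)
    (hε2 : ∀ k i, MemLp (fun ω => ε k ω i) 2 μ)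
    (hvmean : ∀ k i, ∫ ω, v k ω i ∂μ = 0) (hεmean : ∀ k i, ∫ ω, ε k ω i ∂μ = 0)
    (hRv : ∀ k, covMat μ (v k) = R k) (hRε : ∀ k, covMat μ (ε k) = Rbar k)
    (hxv : ∀ k, IndepFun (x k) (v (k + 1)) μ)
    (hxε : ∀ k, IndepFun (x k) (ε (k + 1)) μ)
    (hvε : ∀ k, IndepFun (v (k + 1)) (ε (k + 1)) μ)
    (Sbar : ℕ → Matrix (Fin n) (Fin n) ℝ)
    (hSrec : ∀ k, Sbar (k + 1) =
      (1 - Kbar (k + 1) * Ua (k + 1) * G (k + 1))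
          * (U k * Fx k * Sbar k * (Fx k)ᵀ * U k + U k * Fv k * R (k + 1) * (Fv k)ᵀ * U k)
          * (1 - Kbar (k + 1) * Ua (k + 1) * G (k + 1))ᵀ
        + Kbar (k + 1) * Rbar (k + 1) * (Kbar (k + 1))ᵀ)
    (hxrec : ∀ k ω, x (k + 1) ω =
      (1 - Kbar (k + 1) * Ua (k + 1) * G (k + 1)).mulVec
          ((U k * Fx k).mulVec (x k ω) + (U k * Fv k).mulVec (v (k + 1) ω))
        - (Kbar (k + 1)).mulVec (ε (k + 1) ω))
    (hinit : (Sbar 0 - covMat μ (x 0)).PosSemidef) :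
    ∀ k, (Sbar k - covMat μ (x k)).PosSemidef := by
  intro k
  induction k with
  | zero => exact hinit
  | succ k ih =>
    set M : Matrix (Fin n) (Fin n) ℝ := 1 - Kbar (k + 1) * Ua (k + 1) * G (k + 1) with hM
    have hxfun : x (k + 1) = fun ω =>
        (M * (U k * Fx k)).mulVec (x k ω) + (M * (U k * Fv k)).mulVec (v (k + 1) ω)
          + (-(Kbar (k + 1))).mulVec (ε (k + 1) ω) := by
      funext ω
      rw [hxrec k ω]
      rw [Matrix.mulVec_add, Matrix.mulVec_mulVec, Matrix.mulVec_mulVec, Matrix.neg_mulVec,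
        sub_eq_add_neg]
    have hcov : covMat μ (x (k + 1))
        = (M * (U k * Fx k)) * covMat μ (x k) * (M * (U k * Fx k))ᵀ
          + (M * (U k * Fv k)) * R (k + 1) * (M * (U k * Fv k))ᵀ
          + (-(Kbar (k + 1))) * Rbar (k + 1) * (-(Kbar (k + 1)))ᵀ := by
      rw [hxfun, ← hRv (k + 1), ← hRε (k + 1)]
      exact covMat_step _ _ _ (hxm k) (hvm (k + 1)) (hεm (k + 1)) (hx2 k) (hv2 (k + 1))
        (hε2 (k + 1)) (hvmean (k + 1)) (hεmean (k + 1)) (hxv k) (hxε k) (hvε k)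
    have hS : Sbar (k + 1)
        = (M * (U k * Fx k)) * Sbar k * (M * (U k * Fx k))ᵀ
          + (M * (U k * Fv k)) * R (k + 1) * (M * (U k * Fv k))ᵀ
          + Kbar (k + 1) * Rbar (k + 1) * (Kbar (k + 1))ᵀ := by
      rw [hSrec k, ← hM]
      simp only [Matrix.transpose_mul, hU, Matrix.mul_add, Matrix.add_mul, Matrix.mul_assoc]
    have key : Sbar (k + 1) - covMat μ (x (k + 1))
        = (M * (U k * Fx k)) * (Sbar k - covMat μ (x k)) * (M * (U k * Fx k))ᵀ := by
      rw [hS, hcov]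
      simp only [Matrix.mul_sub, Matrix.sub_mul, Matrix.transpose_neg, Matrix.neg_mul,
        Matrix.mul_neg, neg_neg]
      abel
    rw [key]
    have h := ih.mul_mul_conjTranspose_same (M * (U k * Fx k))
    rwa [Matrix.conjTranspose_eq_transpose_of_trivial] at h
end
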